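/- Let h : ℝ → ℝ be continuous with H(t) = ∫_0^t h(τ) dτ, and suppose there are real numbers 0 < μ₁ ≤ μ₂ < 6 such that 0 < μ₁ H(t) ≤ h(t)t ≤ μ₂ H(t) for all t ≠ 0. Then H(t)/|t|^6 → +∞ as t → 0; equivalently, for every K > 0 there exists δ > 0 such that H(t) ≥ K|t|^6 whenever 0 < |t| ≤ δ. -/
import Mathlib

open Filter Topology

lemma hasDerivAtH (h : ℝ → ℝ) (hcont : Continuous h) (t : ℝ) :
    HasDerivAt (fun u => ∫ τ in (0:ℝ)..u, h τ) (h t) t :=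
  intervalIntegral.integral_hasDerivAt_right (hcont.intervalIntegrable _ _)
    (hcont.stronglyMeasurableAtFilter _ _) hcont.continuousAt

lemma pos_side (h H : ℝ → ℝ) (hcont : Continuous h)
    (hH : ∀ t : ℝ, H t = ∫ τ in (0:ℝ)..t, h τ)
    (μ₂ : ℝ) (hμ₂0 : 0 < μ₂)
    (hub : ∀ t : ℝ, t ≠ 0 → h t * t ≤ μ₂ * H t) :
    ∀ t : ℝ, 0 < t → t ≤ 1 → H 1 * t ^ μ₂ ≤ H t := by
  have hHfun : H = fun u => ∫ τ in (0:ℝ)..u, h τ := funext hH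
  have hderH : ∀ t : ℝ, HasDerivAt H (h t) t := by
    rw [hHfun]; exact hasDerivAtH h hcont
  set f : ℝ → ℝ := fun t => H t * t ^ (-μ₂) with hf
  have hderf : ∀ x : ℝ, 0 < x →
      HasDerivAt f (h x * x ^ (-μ₂) + H x * (-μ₂ * x ^ (-μ₂ - 1))) x := by
    intro x hx
    exact (hderH x).mul (Real.hasDerivAt_rpow_const (Or.inl hx.ne'))
  have hanti : AntitoneOn f (Set.Ioi (0:ℝ)) := by
    apply antitoneOn_of_deriv_nonpos (convex_Ioi 0)
    · intro x hx
      exact ((hderf x hx).continuousAt).continuousWithinAt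
    · intro x hx
      rw [interior_Ioi] at hx
      exact (hderf x hx).differentiableAt.differentiableWithinAt
    · intro x hx
      rw [interior_Ioi] at hx
      rw [(hderf x hx).deriv]
      have hxpow : (0:ℝ) < x ^ (-μ₂ - 1) := Real.rpow_pos_of_pos hx _
      have key : h x * x ≤ μ₂ * H x := hub x hx.ne'
      have hsplit : x ^ (-μ₂) = x * x ^ (-μ₂ - 1) := by
        rw [← Real.rpow_one_add' hx.le (by linarith)]
        ring_nf
      rw [hsplit]
      have : h x * (x * x ^ (-μ₂ - 1)) + H x * (-μ₂ * x ^ (-μ₂ - 1))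
          = (h x * x - μ₂ * H x) * x ^ (-μ₂ - 1) := by ring
      rw [this]
      exact mul_nonpos_of_nonpos_of_nonneg (by linarith) hxpow.le
  intro t ht ht1
  have := hanti (Set.mem_Ioi.2 ht) (Set.mem_Ioi.2 one_pos) ht1
  have h1 : f 1 = H 1 := by simp [hf]
  rw [h1] at this
  have htpow : (0:ℝ) < t ^ μ₂ := Real.rpow_pos_of_pos ht _
  calc H 1 * t ^ μ₂ ≤ (H t * t ^ (-μ₂)) * t ^ μ₂ := by
        exact mul_le_mul_of_nonneg_right this htpow.le
    _ = H t := by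
        rw [mul_assoc, ← Real.rpow_add ht]; simp

/-- For a mass-subcritical nonlinearity (`μ₂ < 6`), `H(t)/|t|^6 → +∞` as `t → 0`. -/
theorem stmt_14 (h H : ℝ → ℝ) (hcont : Continuous h)
    (hH : ∀ t : ℝ, H t = ∫ τ in (0:ℝ)..t, h τ)
    (μ₁ μ₂ : ℝ) (hμ₁ : 0 < μ₁) (hμ : μ₁ ≤ μ₂) (hμ₂ : μ₂ < 6)
    (hgrowth : ∀ t : ℝ, t ≠ 0 →
      0 < μ₁ * H t ∧ μ₁ * H t ≤ h t * t ∧ h t * t ≤ μ₂ * H t) :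
    Tendsto (fun t : ℝ => H t / |t| ^ (6:ℕ)) (𝓝[≠] 0) atTop
    ∧ ∀ K : ℝ, 0 < K → ∃ δ : ℝ, 0 < δ ∧ ∀ t : ℝ, 0 < |t| → |t| ≤ δ →
        K * |t| ^ (6:ℕ) ≤ H t := by
  have hμ₂0 : 0 < μ₂ := lt_of_lt_of_le hμ₁ hμ
  have hHpos : ∀ t : ℝ, t ≠ 0 → 0 < H t := by
    intro t ht
    have h1 := (hgrowth t ht).1
    nlinarith
  -- positive side
  have hPos := pos_side h H hcont hH μ₂ hμ₂0 (fun t ht => (hgrowth t ht).2.2)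
  -- negative side via reflection
  set h' : ℝ → ℝ := fun t => -h (-t) with hh'
  set H' : ℝ → ℝ := fun t => H (-t) with hH'def
  have hH' : ∀ t : ℝ, H' t = ∫ τ in (0:ℝ)..t, h' τ := by
    intro t
    have : (∫ τ in (0:ℝ)..t, h' τ) = -∫ τ in (0:ℝ)..t, h (-τ) := by
      simp [hh', intervalIntegral.integral_neg]
    rw [this, intervalIntegral.integral_comp_neg h]
    simp only [neg_zero, hH'def]
    rw [hH (-t), intervalIntegral.integral_symm]
  have hNeg := pos_side h' H' (by continuity) hH' μ₂ hμ₂0 (by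
    intro t ht
    have := (hgrowth (-t) (neg_ne_zero.2 ht)).2.2
    simp only [hh', hH'def]
    nlinarith)
  -- combine
  set c : ℝ := min (H 1) (H (-1)) with hc
  have hcpos : 0 < c := lt_min (hHpos 1 one_ne_zero) (hHpos (-1) (by norm_num))
  have hlow : ∀ t : ℝ, 0 < |t| → |t| ≤ 1 → c * |t| ^ μ₂ ≤ H t := by
    intro t ht ht1
    have hpow : (0:ℝ) < |t| ^ μ₂ := Real.rpow_pos_of_pos ht _
    rcases lt_trichotomy t 0 with hlt | h0 | hgt
    · have habs : |t| = -t := abs_of_neg hlt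
      have := hNeg (-t) (by linarith) (by rw [habs] at ht1; linarith)
      have hH'1 : H' 1 = H (-1) := by simp [hH'def]
      have hH't : H' (-t) = H t := by simp [hH'def]
      rw [hH'1, hH't] at this
      rw [habs] at hpow ⊢
      calc c * (-t) ^ μ₂ ≤ H (-1) * (-t) ^ μ₂ :=
            mul_le_mul_of_nonneg_right (min_le_right _ _) hpow.le
        _ ≤ H t := this
    · simp [h0] at ht
    · have habs : |t| = t := abs_of_pos hgt
      have := hPos t hgt (by rw [habs] at ht1; exact ht1)
      rw [habs] at hpow ⊢
      calc c * t ^ μ₂ ≤ H 1 * t ^ μ₂ :=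
            mul_le_mul_of_nonneg_right (min_le_left _ _) hpow.le
        _ ≤ H t := this
  have main : ∀ K : ℝ, 0 < K → ∃ δ : ℝ, 0 < δ ∧ ∀ t : ℝ, 0 < |t| → |t| ≤ δ →
      K * |t| ^ (6:ℕ) ≤ H t := by
    intro K hK
    have hex : (0:ℝ) < 6 - μ₂ := by linarith
    set δ : ℝ := min 1 ((c / K) ^ (6 - μ₂)⁻¹) with hδ
    have hδpos : 0 < δ := lt_min one_pos (Real.rpow_pos_of_pos (div_pos hcpos hK) _)
    refine ⟨δ, hδpos, fun t ht htδ => ?_⟩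
    have ht1 : |t| ≤ 1 := le_trans htδ (min_le_left _ _)
    have hkey : |t| ^ (6 - μ₂) ≤ c / K := by
      have h1 : |t| ^ (6 - μ₂) ≤ ((c / K) ^ (6 - μ₂)⁻¹) ^ (6 - μ₂) :=
        Real.rpow_le_rpow (abs_nonneg t) (le_trans htδ (min_le_right _ _)) hex.le
      rwa [← Real.rpow_mul (div_pos hcpos hK).le,
        inv_mul_cancel₀ hex.ne', Real.rpow_one] at h1
    have hsplit : |t| ^ (6:ℕ) = |t| ^ (6 - μ₂) * |t| ^ μ₂ := by
      rw [← Real.rpow_add ht, ← Real.rpow_natCast]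
      norm_num
    calc K * |t| ^ (6:ℕ) = (K * |t| ^ (6 - μ₂)) * |t| ^ μ₂ := by rw [hsplit]; ring
      _ ≤ (K * (c / K)) * |t| ^ μ₂ := by
          have : (0:ℝ) ≤ |t| ^ μ₂ := (Real.rpow_pos_of_pos ht _).le
          have := mul_le_mul_of_nonneg_left hkey hK.le
          nlinarith
      _ = c * |t| ^ μ₂ := by field_simp
      _ ≤ H t := hlow t ht ht1
  refine ⟨?_, main⟩
  rw [tendsto_atTop]
  intro b
  obtain ⟨δ, hδpos, hδ⟩ := main (max b 1) (lt_of_lt_of_le one_pos (le_max_right _ _))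
  have hev : ∀ᶠ t in 𝓝[≠] (0:ℝ), |t| ≤ δ := by
    apply eventually_nhdsWithin_of_eventually_nhds
    have : Metric.closedBall (0:ℝ) δ ∈ 𝓝 (0:ℝ) := Metric.closedBall_mem_nhds _ hδpos
    filter_upwards [this] with t ht
    simpa [Real.dist_eq] using ht
  filter_upwards [hev, eventually_mem_nhdsWithin] with t htδ (htne : t ≠ 0)
  have habs : 0 < |t| := abs_pos.2 htne
  have := hδ t habs htδ
  have hp : (0:ℝ) < |t| ^ (6:ℕ) := pow_pos habs _
  rw [le_div_iff₀ hp]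
  calc b * |t| ^ (6:ℕ) ≤ max b 1 * |t| ^ (6:ℕ) :=
        mul_le_mul_of_nonneg_right (le_max_left _ _) hp.le
    _ ≤ H t := this
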